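/- Sufficient condition for CRCQ (claim of the paper's remark 'Ensuring CRCQ'). Assume X_r is compact; that ∇b(u) ≠ 0 for every (x,u) ∈ X_r with b(u) = 0; that (∂h_r/∂u)(x,u) ≠ 0 for every (x,u) ∈ X_r with h_r(x,u) = 0; and that there exists c < 1 such that for every (x,u) ∈ X_r with b(u) = 0 and h_r(x,u) = 0 one has |⟨∇b(u), ((∂h_r/∂u)(x,u))^T⟩| ≤ c·‖∇b(u)‖·‖(∂h_r/∂u)(x,u)‖. Then CRCQ holds for QP at every (x,u) ∈ X_r. -/

import Mathlib

open ContinuousLinearMap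


open Set Filter Topology
open scoped RealInnerProductSpace

noncomputable def hseq {n m : ℕ}
    (f : EuclideanSpace ℝ (Fin n) × EuclideanSpace ℝ (Fin m) → EuclideanSpace ℝ (Fin n))
    (h : EuclideanSpace ℝ (Fin n) → ℝ) (β : ℝ) :
    ℕ → EuclideanSpace ℝ (Fin n) × EuclideanSpace ℝ (Fin m) → ℝ
  | 0 => fun p => h p.1
  | i + 1 => fun p =>
      fderiv ℝ (fun x => hseq f h β i (x, p.2)) p.1 (f p) + β * hseq f h β i p

noncomputable def Xset {n m : ℕ}
    (f : EuclideanSpace ℝ (Fin n) × EuclideanSpace ℝ (Fin m) → EuclideanSpace ℝ (Fin n))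
    (h : EuclideanSpace ℝ (Fin n) → ℝ) (b : EuclideanSpace ℝ (Fin m) → ℝ) (β : ℝ) (i : ℕ) :
    Set (EuclideanSpace ℝ (Fin n) × EuclideanSpace ℝ (Fin m)) :=
  {p | 0 ≤ h p.1 ∧ 0 ≤ b p.2 ∧ 0 ≤ hseq f h β i p}

noncomputable def QPfeas {n m : ℕ}
    (f : EuclideanSpace ℝ (Fin n) × EuclideanSpace ℝ (Fin m) → EuclideanSpace ℝ (Fin n))
    (h : EuclideanSpace ℝ (Fin n) → ℝ) (b : EuclideanSpace ℝ (Fin m) → ℝ) (β : ℝ)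
    (r : ℕ) (α γ : ℝ) (p : EuclideanSpace ℝ (Fin n) × EuclideanSpace ℝ (Fin m)) :
    Set (EuclideanSpace ℝ (Fin m)) :=
  {q | 0 ≤ ⟪gradient b p.2, q⟫ + α * b p.2 ∧
       0 ≤ fderiv ℝ (fun x => hseq f h β r (x, p.2)) p.1 (f p)
         + fderiv ℝ (fun u => hseq f h β r (p.1, u)) p.2 q + γ * hseq f h β r p}

noncomputable def QPobj {n m : ℕ}
    (Φ : EuclideanSpace ℝ (Fin n) → ℝ) (w : EuclideanSpace ℝ (Fin m) → EuclideanSpace ℝ (Fin n))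
    (ε : ℝ) (p : EuclideanSpace ℝ (Fin n) × EuclideanSpace ℝ (Fin m))
    (q : EuclideanSpace ℝ (Fin m)) : ℝ :=
  (1 / 2) * ‖q + ε • (ContinuousLinearMap.adjoint (fderiv ℝ w p.2)) (gradient Φ p.1)‖ ^ 2

noncomputable def lieD {n m : ℕ}
    (f : EuclideanSpace ℝ (Fin n) × EuclideanSpace ℝ (Fin m) → EuclideanSpace ℝ (Fin n))
    (h : EuclideanSpace ℝ (Fin n) → ℝ) :
    ℕ → EuclideanSpace ℝ (Fin n) × EuclideanSpace ℝ (Fin m) → ℝ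
  | 0 => fun p => h p.1
  | i + 1 => fun p => fderiv ℝ (fun x => lieD f h i (x, p.2)) p.1 (f p)

/-- The two constraint gradients (w.r.t. the decision variable `q`) of the controller QP,
as a family indexed by `Fin 2`, evaluated at the point `p = (x,u)`:
the gradient of the input constraint is `∇b(u)`, and the gradient of the high-order CBF
constraint is `((∂h_r/∂u)(x,u))ᵀ`. -/
noncomputable def constraintGrads {n m : ℕ}
    (f : EuclideanSpace ℝ (Fin n) × EuclideanSpace ℝ (Fin m) → EuclideanSpace ℝ (Fin n))
    (h : EuclideanSpace ℝ (Fin n) → ℝ) (b : EuclideanSpace ℝ (Fin m) → ℝ) (β : ℝ) (r : ℕ)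
    (p : EuclideanSpace ℝ (Fin n) × EuclideanSpace ℝ (Fin m)) :
    Fin 2 → EuclideanSpace ℝ (Fin m) :=
  ![gradient b p.2, gradient (fun u => hseq f h β r (p.1, u)) p.2]

/-- The constant-rank constraint qualification (CRCQ) for the controller QP at a point
`p = (x,u)`: there is a neighborhood `V` of `p` such that every subfamily of the gradients of
the constraints active at `p` (the input constraint is active iff `b(u) = 0`; the high-order CBF
constraint is active iff `h_r(x,u) = 0`) has constant rank as the evaluation point ranges
over `V`. -/
noncomputable def CRCQ {n m : ℕ}
    (f : EuclideanSpace ℝ (Fin n) × EuclideanSpace ℝ (Fin m) → EuclideanSpace ℝ (Fin n))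
    (h : EuclideanSpace ℝ (Fin n) → ℝ) (b : EuclideanSpace ℝ (Fin m) → ℝ) (β : ℝ) (r : ℕ)
    (p : EuclideanSpace ℝ (Fin n) × EuclideanSpace ℝ (Fin m)) : Prop :=
  ∃ V ∈ nhds p, ∀ S : Set (Fin 2),
    (S ⊆ {i | (i = 0 ∧ b p.2 = 0) ∨ (i = 1 ∧ hseq f h β r p = 0)}) →
    ∀ p₁ ∈ V, ∀ p₂ ∈ V,
      Module.finrank ℝ (Submodule.span ℝ (constraintGrads f h b β r p₁ '' S))
        = Module.finrank ℝ (Submodule.span ℝ (constraintGrads f h b β r p₂ '' S))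

section
variable {n m : ℕ}
local notation "E" => EuclideanSpace ℝ (Fin n)
local notation "F" => EuclideanSpace ℝ (Fin m)

lemma hseq_contDiff (f : E × F → E) (h : E → ℝ) (β : ℝ) {r : ℕ}
    (hf : ContDiff ℝ (r + 1 : ℕ) f) (hh : ContDiff ℝ (r + 2 : ℕ) h) :
    ∀ i k : ℕ, i + k ≤ r + 2 → ContDiff ℝ (k : ℕ∞) (hseq f h β i) := by
  intro i
  induction i with
  | zero =>
    intro k hk
    exact (hh.of_le (Nat.cast_le.mpr (by omega))).comp contDiff_fst
  | succ i ih =>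
    intro k hk
    have hi : ContDiff ℝ ((k + 1 : ℕ) : ℕ∞) (hseq f h β i) := ih (k + 1) (by omega)
    have hdiff : Differentiable ℝ (hseq f h β i) :=
      hi.differentiable (by simp)
    have key : (hseq f h β (i + 1)) = fun p : E × F =>
        fderiv ℝ (hseq f h β i) p (f p, 0) + β * hseq f h β i p := by
      funext p
      have h1 : fderiv ℝ (fun x => hseq f h β i (x, p.2)) p.1
          = (fderiv ℝ (hseq f h β i) p).comp (inl ℝ E F) :=
        ((hdiff (p.1, p.2)).hasFDerivAt.comp p.1
          (hasFDerivAt_prodMk_left p.1 p.2)).fderiv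
      show fderiv ℝ (fun x => hseq f h β i (x, p.2)) p.1 (f p) + β * hseq f h β i p = _
      rw [h1]
      simp
    rw [key]
    have hfd : ContDiff ℝ (k : ℕ∞) (fun p => fderiv ℝ (hseq f h β i) p) :=
      hi.fderiv_right (by exact_mod_cast le_refl (k + 1))
    have hval : ContDiff ℝ (k : ℕ∞) (fun p : E × F => ((f p, 0) : E × F)) :=
      ContDiff.prodMk (show ContDiff ℝ (k : ℕ∞) f from hf.of_le (by exact_mod_cast (show k ≤ r + 1 by omega))) contDiff_const
    exact (hfd.clm_apply hval).add
      (contDiff_const.mul (hi.of_le (Nat.cast_le.mpr (by omega))))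

lemma grad_u_eq (g : E × F → ℝ) (hg : Differentiable ℝ g) (p : E × F) :
    gradient (fun u => g (p.1, u)) p.2
      = (InnerProductSpace.toDual ℝ F).symm ((fderiv ℝ g p).comp (inr ℝ E F)) := by
  unfold gradient
  congr 1
  exact ((hg (p.1, p.2)).hasFDerivAt.comp p.2 (hasFDerivAt_prodMk_right p.1 p.2)).fderiv

lemma indep_of_cs (v0 v1 : F) (hlt : |⟪v0, v1⟫| < ‖v0‖ * ‖v1‖) :
    LinearIndependent ℝ ![v0, v1] := by
  rw [linearIndependent_fin2]
  constructor
  · simp only [Matrix.cons_val_one, Matrix.head_cons]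
    rintro rfl
    simp at hlt
  · intro a ha
    simp only [Matrix.cons_val_one, Matrix.head_cons, Matrix.cons_val_zero] at ha
    rw [← ha, real_inner_smul_left, real_inner_self_eq_norm_mul_norm, norm_smul,
      abs_mul, Real.norm_eq_abs, abs_mul, abs_norm, mul_assoc] at hlt
    exact lt_irrefl _ hlt

open scoped Classical in
lemma rank_formula (v0 v1 : F) (S : Set (Fin 2))
    (h0 : 0 ∈ S → v0 ≠ 0) (h1 : 1 ∈ S → v1 ≠ 0)
    (h01 : 0 ∈ S → 1 ∈ S → LinearIndependent ℝ ![v0, v1]) :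
    Module.finrank ℝ (Submodule.span ℝ (![v0, v1] '' S))
      = (if 0 ∈ S then 1 else 0) + (if 1 ∈ S then 1 else 0) := by
  by_cases hs0 : (0 : Fin 2) ∈ S <;> by_cases hs1 : (1 : Fin 2) ∈ S
  · have hS : S = {0, 1} := by ext i; fin_cases i <;> simp [hs0, hs1]
    have him : (![v0, v1] '' S : Set F) = Set.range ![v0, v1] := by
      rw [hS]; ext x
      simp [Fin.exists_fin_two, Set.image_insert_eq]
      tauto
    rw [him, finrank_span_eq_card (h01 hs0 hs1)]
    simp [hs0, hs1]
  · have hS : S = {0} := by ext i; fin_cases i <;> simp [hs0, hs1]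
    rw [hS, Set.image_singleton]
    rw [show (![v0, v1] 0) = v0 from rfl, finrank_span_singleton (h0 hs0)]
    simp [hs0, hs1]
  · have hS : S = {1} := by ext i; fin_cases i <;> simp [hs0, hs1]
    rw [hS, Set.image_singleton]
    rw [show (![v0, v1] 1) = v1 from rfl, finrank_span_singleton (h1 hs1)]
    simp [hs0, hs1]
  · have hS : S = ∅ := by ext i; fin_cases i <;> simp [hs0, hs1]
    rw [hS]
    simp [hs0, hs1]

end

/-- Sufficient condition for CRCQ (claim of the paper's remark "Ensuring CRCQ"): if `X_r` is
compact, the active constraint gradients are nonvanishing, and `∇b(u)` and `((∂h_r/∂u)(x,u))ᵀ`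
are linearly independent in a non-vanishing fashion on the set where both constraints are
active, then CRCQ holds for the controller QP at every point of `X_r`. -/
theorem crcq_sufficient_condition
    {n m r : ℕ} (hn : 0 < n) (hm : 0 < m) (hr : 0 < r)
    (f : EuclideanSpace ℝ (Fin n) × EuclideanSpace ℝ (Fin m) → EuclideanSpace ℝ (Fin n))
    (h : EuclideanSpace ℝ (Fin n) → ℝ) (b : EuclideanSpace ℝ (Fin m) → ℝ)
    (hf : ContDiff ℝ (r + 1 : ℕ) f) (hh : ContDiff ℝ (r + 2 : ℕ) h) (hb : ContDiff ℝ 2 b)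
    (β : ℝ) (hβ : 0 < β)
    (hcomp : IsCompact (Xset f h b β r))
    (hbgrad : ∀ p ∈ Xset f h b β r, b p.2 = 0 → gradient b p.2 ≠ 0)
    (hhgrad : ∀ p ∈ Xset f h b β r, hseq f h β r p = 0 →
      gradient (fun u => hseq f h β r (p.1, u)) p.2 ≠ 0)
    (hindep : ∃ c < (1 : ℝ), ∀ p ∈ Xset f h b β r, b p.2 = 0 → hseq f h β r p = 0 →
      |⟪gradient b p.2, gradient (fun u => hseq f h β r (p.1, u)) p.2⟫|
        ≤ c * ‖gradient b p.2‖ * ‖gradient (fun u => hseq f h β r (p.1, u)) p.2‖) :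
    ∀ p ∈ Xset f h b β r, CRCQ f h b β r p := by
  classical
  obtain ⟨c, hc1, hcs⟩ := hindep
  set g0 : EuclideanSpace ℝ (Fin n) × EuclideanSpace ℝ (Fin m) → EuclideanSpace ℝ (Fin m) :=
    fun p => gradient b p.2 with hg0def
  set g1 : EuclideanSpace ℝ (Fin n) × EuclideanSpace ℝ (Fin m) → EuclideanSpace ℝ (Fin m) :=
    fun p => gradient (fun u => hseq f h β r (p.1, u)) p.2 with hg1def
  -- continuity of the two gradient fields
  have hH2 : ContDiff ℝ ((2 : ℕ) : ℕ∞) (hseq f h β r) :=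
    hseq_contDiff f h β hf hh r 2 (by omega)
  have hH1 : ContDiff ℝ (1 : ℕ∞) (hseq f h β r) :=
    hH2.of_le (by exact_mod_cast Nat.cast_le.mpr one_le_two)
  have hHdiff : Differentiable ℝ (hseq f h β r) := hH1.differentiable (by simp)
  have hHfc : Continuous (fun p => fderiv ℝ (hseq f h β r) p) :=
    (contDiff_one_iff_fderiv.mp hH1).2
  have hg1c : Continuous g1 := by
    have heq : g1 = fun p => (InnerProductSpace.toDual ℝ (EuclideanSpace ℝ (Fin m))).symm
        ((fderiv ℝ (hseq f h β r) p).comp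
          (inr ℝ (EuclideanSpace ℝ (Fin n)) (EuclideanSpace ℝ (Fin m)))) :=
      funext fun p => grad_u_eq _ hHdiff p
    rw [heq]
    exact (LinearIsometryEquiv.continuous _).comp (hHfc.clm_comp continuous_const)
  have hb1 : ContDiff ℝ (1 : ℕ∞) b := hb.of_le one_le_two
  have hbfc : Continuous (fderiv ℝ b) := (contDiff_one_iff_fderiv.mp hb1).2
  have hg0c : Continuous g0 := by
    have : Continuous (fun u : EuclideanSpace ℝ (Fin m) => gradient b u) := by
      have : (fun u : EuclideanSpace ℝ (Fin m) => gradient b u)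
          = fun u => (InnerProductSpace.toDual ℝ (EuclideanSpace ℝ (Fin m))).symm
              (fderiv ℝ b u) := rfl
      rw [this]
      exact (LinearIsometryEquiv.continuous _).comp hbfc
    exact this.comp continuous_snd
  intro p hp
  -- eventual conditions near p
  have ev0 : ∀ᶠ p' in nhds p, (b p.2 = 0 → g0 p' ≠ 0) := by
    by_cases hb0 : b p.2 = 0
    · exact ((hg0c.continuousAt (x := p)).eventually_ne (hbgrad p hp hb0)).mono
        fun p' h' _ => h'
    · exact Filter.Eventually.of_forall fun p' h' => absurd h' hb0
  have ev1 : ∀ᶠ p' in nhds p, (hseq f h β r p = 0 → g1 p' ≠ 0) := by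
    by_cases hh0 : hseq f h β r p = 0
    · exact ((hg1c.continuousAt (x := p)).eventually_ne (hhgrad p hp hh0)).mono
        fun p' h' _ => h'
    · exact Filter.Eventually.of_forall fun p' h' => absurd h' hh0
  have ev2 : ∀ᶠ p' in nhds p, ((b p.2 = 0 ∧ hseq f h β r p = 0) →
      |⟪g0 p', g1 p'⟫| < ‖g0 p'‖ * ‖g1 p'‖) := by
    by_cases hb0 : b p.2 = 0 ∧ hseq f h β r p = 0
    · have h0 := hbgrad p hp hb0.1
      have h1 := hhgrad p hp hb0.2
      have hstrict : |⟪g0 p, g1 p⟫| < ‖g0 p‖ * ‖g1 p‖ := by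
        have hle := hcs p hp hb0.1 hb0.2
        have hpos : 0 < ‖g0 p‖ * ‖g1 p‖ :=
          mul_pos (norm_pos_iff.mpr h0) (norm_pos_iff.mpr h1)
        nlinarith
      have hca : ContinuousAt (fun p' => |⟪g0 p', g1 p'⟫|) p :=
        ((hg0c.inner hg1c).abs).continuousAt
      have hcb : ContinuousAt (fun p' => ‖g0 p'‖ * ‖g1 p'‖) p :=
        ((hg0c.norm).mul (hg1c.norm)).continuousAt
      exact (hca.eventually_lt hcb hstrict).mono fun p' h' _ => h'
    · exact Filter.Eventually.of_forall fun p' h' => absurd h' hb0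
  refine ⟨{p' | (b p.2 = 0 → g0 p' ≠ 0) ∧ (hseq f h β r p = 0 → g1 p' ≠ 0) ∧
      ((b p.2 = 0 ∧ hseq f h β r p = 0) → |⟪g0 p', g1 p'⟫| < ‖g0 p'‖ * ‖g1 p'‖)},
    (ev0.and (ev1.and ev2)), ?_⟩
  intro S hS p₁ hp₁ p₂ hp₂
  have hS0 : (0 : Fin 2) ∈ S → b p.2 = 0 := fun h0 => by
    rcases hS h0 with ⟨_, hz⟩ | ⟨hz, _⟩
    · exact hz
    · exact absurd hz (by decide)
  have hS1 : (1 : Fin 2) ∈ S → hseq f h β r p = 0 := fun h1 => by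
    rcases hS h1 with ⟨hz, _⟩ | ⟨_, hz⟩
    · exact absurd hz (by decide)
    · exact hz
  have key : ∀ p' : EuclideanSpace ℝ (Fin n) × EuclideanSpace ℝ (Fin m), (b p.2 = 0 → g0 p' ≠ 0) → (hseq f h β r p = 0 → g1 p' ≠ 0) →
      ((b p.2 = 0 ∧ hseq f h β r p = 0) → |⟪g0 p', g1 p'⟫| < ‖g0 p'‖ * ‖g1 p'‖) →
      Module.finrank ℝ (Submodule.span ℝ (constraintGrads f h b β r p' '' S))
        = (if (0 : Fin 2) ∈ S then 1 else 0) + (if (1 : Fin 2) ∈ S then 1 else 0) := by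
    intro p' q0 q1 q2
    have := rank_formula (g0 p') (g1 p') S
      (fun h0 => q0 (hS0 h0)) (fun h1 => q1 (hS1 h1))
      (fun h0 h1 => indep_of_cs _ _ (q2 ⟨hS0 h0, hS1 h1⟩))
    exact this
  obtain ⟨q01, q11, q21⟩ := hp₁
  obtain ⟨q02, q12, q22⟩ := hp₂
  rw [key p₁ q01 q11 q21, key p₂ q02 q12 q22]
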